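/- (Proposition 4.) Let ρ be a density matrix on the N-cell tensor product space and let U = U_1 ⊗ U_2 ⊗ ⋯ ⊗ U_N be a tensor product of unitary matrices U_i acting on the individual cells. Then there exists a real orthogonal matrix O such that γ_C(UρU†, M) = Oᵀ γ_C(ρ, M) O; in particular γ_C(UρU†, M) and γ_C(ρ, M) have the same eigenvalues, so the quantum state advantage is invariant under local unitary evolution: Γ_C(UρU†) = Γ_C(ρ). -/

import Mathlib

open Matrix BigOperators
open scoped ComplexOrder

noncomputable section

/-- Commutator of two square matrices. -/
def mComm {d : Type*} [Fintype d] (A B : Matrix d d ℂ) : Matrix d d ℂ := A * B - B * A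

/-- Commutation matrix `γ_C(ρ, M)` built from the square root `s = √ρ` of a density
matrix, with entries `γ_C(ρ,M)_{μν} = −tr([M_μ,√ρ][M_ν,√ρ])`. -/
def gammaC {d ι : Type*} [Fintype d] (s : Matrix d d ℂ) (M : ι → Matrix d d ℂ) :
    Matrix ι ι ℝ :=
  fun μ ν => (-(Matrix.trace (mComm (M μ) s * mComm (M ν) s))).re

/-- Largest eigenvalue of a (finite, real symmetric) matrix. -/
def maxEig {ι : Type*} [Fintype ι] (G : Matrix ι ι ℝ) : ℝ :=
  sSup {c : ℝ | ∃ v : ι → ℝ, v ≠ 0 ∧ G.mulVec v = c • v}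

/-- The operator on the `N`-cell space `⊗_j ℂ^{n_j}` acting as `A` on cell `i`
and as the identity on all other cells. -/
def localOp {N : ℕ} (n : Fin N → ℕ) (i : Fin N)
    (A : Matrix (Fin (n i)) (Fin (n i)) ℂ) :
    Matrix ((j : Fin N) → Fin (n j)) ((j : Fin N) → Fin (n j)) ℂ :=
  fun x y => A (x i) (y i) * ∏ j ∈ Finset.univ.erase i, (if x j = y j then 1 else 0)

/-- The local observable set built from a choice `A i α` of Hermitian bases of the
individual cells. -/
def obsFamily {N : ℕ} (n : Fin N → ℕ)
    (A : ∀ i : Fin N, Fin (n i ^ 2) → Matrix (Fin (n i)) (Fin (n i)) ℂ) :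
    ((i : Fin N) × Fin (n i ^ 2)) →
      Matrix ((j : Fin N) → Fin (n j)) ((j : Fin N) → Fin (n j)) ℂ :=
  fun μ => localOp n μ.1 (A μ.1 μ.2)

/-- The tensor product `U_1 ⊗ U_2 ⊗ ⋯ ⊗ U_N` of single-cell matrices. -/
def prodOp {N : ℕ} (n : Fin N → ℕ)
    (U : ∀ i : Fin N, Matrix (Fin (n i)) (Fin (n i)) ℂ) :
    Matrix ((j : Fin N) → Fin (n j)) ((j : Fin N) → Fin (n j)) ℂ :=
  fun x y => ∏ i, U i (x i) (y i)

section Aux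

variable {N : ℕ} {n : Fin N → ℕ}

lemma prodOp_mul (B C : ∀ i : Fin N, Matrix (Fin (n i)) (Fin (n i)) ℂ) :
    prodOp n B * prodOp n C = prodOp n (fun i => B i * C i) := by
  ext x y
  simp only [Matrix.mul_apply, prodOp]
  rw [Finset.prod_univ_sum, Fintype.piFinset_univ]
  exact Finset.sum_congr rfl fun z _ => (Finset.prod_mul_distrib).symm

lemma prodOp_conjTranspose (B : ∀ i : Fin N, Matrix (Fin (n i)) (Fin (n i)) ℂ) :
    (prodOp n B)ᴴ = prodOp n (fun i => (B i)ᴴ) := by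
  ext x y
  simp [prodOp, Matrix.conjTranspose_apply, star_prod]

lemma prodOp_one : prodOp n (fun i => (1 : Matrix (Fin (n i)) (Fin (n i)) ℂ)) = 1 := by
  ext x y
  simp only [prodOp, Matrix.one_apply, Finset.prod_boole]
  simp [funext_iff]

lemma localOp_eq_prodOp (i : Fin N) (A : Matrix (Fin (n i)) (Fin (n i)) ℂ) :
    localOp n i A
      = prodOp n (Function.update (fun j => (1 : Matrix (Fin (n j)) (Fin (n j)) ℂ)) i A) := by
  ext x y
  simp only [localOp, prodOp]
  rw [← Finset.mul_prod_erase Finset.univ _ (Finset.mem_univ i)]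
  congr 1
  · rw [Function.update_self]
  · refine Finset.prod_congr rfl fun j hj => ?_
    rw [Function.update_of_ne (Finset.ne_of_mem_erase hj)]
    simp [Matrix.one_apply]

lemma localOp_conj (i : Fin N) (A : Matrix (Fin (n i)) (Fin (n i)) ℂ)
    (U : ∀ i : Fin N, Matrix (Fin (n i)) (Fin (n i)) ℂ)
    (hU : ∀ i, (U i)ᴴ * U i = 1 ∧ U i * (U i)ᴴ = 1) :
    (prodOp n U)ᴴ * localOp n i A * prodOp n U = localOp n i ((U i)ᴴ * A * U i) := by
  rw [localOp_eq_prodOp, localOp_eq_prodOp, prodOp_conjTranspose, prodOp_mul, prodOp_mul]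
  have hfun : (fun j => (U j)ᴴ * Function.update (fun j => (1 : Matrix (Fin (n j)) (Fin (n j)) ℂ)) i A j * U j)
      = Function.update (fun j => (1 : Matrix (Fin (n j)) (Fin (n j)) ℂ)) i ((U i)ᴴ * A * U i) := by
    funext j
    by_cases h : j = i
    · subst h; simp
    · rw [Function.update_of_ne h, Function.update_of_ne h, Matrix.mul_one, (hU j).1]
  rw [hfun]

lemma localOp_sum {ι : Type*} (t : Finset ι) (i : Fin N)
    (f : ι → Matrix (Fin (n i)) (Fin (n i)) ℂ) :
    localOp n i (∑ x ∈ t, f x) = ∑ x ∈ t, localOp n i (f x) := by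
  ext a b
  simp [localOp, Matrix.sum_apply, Finset.sum_mul]

lemma localOp_smul (c : ℂ) (i : Fin N) (f : Matrix (Fin (n i)) (Fin (n i)) ℂ) :
    localOp n i (c • f) = c • localOp n i f := by
  ext a b
  simp [localOp, mul_assoc]

lemma trace_key {m : ℕ} (B : Fin (m ^ 2) → Matrix (Fin m) (Fin m) ℂ)
    (hBo : ∀ α β, Matrix.trace (B α * B β) = if α = β then 1 else 0)
    (g : Fin (m ^ 2) → ℂ) (α : Fin (m ^ 2)) :
    Matrix.trace (B α * ∑ β, g β • B β) = g α := by
  rw [Matrix.mul_sum]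
  simp only [Matrix.mul_smul, Matrix.trace_sum, Matrix.trace_smul, hBo, smul_ite, smul_eq_mul,
    mul_one, mul_zero, smul_zero]
  simp

lemma herm_expand {m : ℕ} (B : Fin (m ^ 2) → Matrix (Fin m) (Fin m) ℂ)
    (hBo : ∀ α β, Matrix.trace (B α * B β) = if α = β then 1 else 0)
    (H : Matrix (Fin m) (Fin m) ℂ) :
    H = ∑ β, Matrix.trace (B β * H) • B β := by
  rcases Nat.eq_zero_or_pos m with hm | hm
  · subst hm; ext x y; exact x.elim0
  haveI : Nonempty (Fin (m ^ 2)) := ⟨⟨0, by positivity⟩⟩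
  have li : LinearIndependent ℂ B := by
    rw [Fintype.linearIndependent_iff]
    intro g hg α
    have h := trace_key B hBo g α
    rw [hg, Matrix.mul_zero, Matrix.trace_zero] at h
    exact h.symm
  have hcard : Fintype.card (Fin (m ^ 2)) = Module.finrank ℂ (Matrix (Fin m) (Fin m) ℂ) := by
    simp [Module.finrank_matrix, sq]
  set b := basisOfLinearIndependentOfCardEqFinrank li hcard with hb
  have hcoe : ⇑b = B := coe_basisOfLinearIndependentOfCardEqFinrank li hcard
  have hrepr : H = ∑ β, b.repr H β • B β := by
    conv_lhs => rw [← b.sum_repr H]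
    simp [hcoe]
  have h2 : ∀ β, Matrix.trace (B β * H) = b.repr H β := by
    intro β
    conv_lhs => rw [hrepr]
    exact trace_key B hBo _ β
  rw [Finset.sum_congr rfl fun β _ => by rw [h2 β]]
  exact hrepr

lemma trace_mul_herm_real {m : Type*} [Fintype m] {X Y : Matrix m m ℂ}
    (hX : X.IsHermitian) (hY : Y.IsHermitian) :
    ((Matrix.trace (X * Y)).re : ℂ) = Matrix.trace (X * Y) := by
  rw [← Complex.conj_eq_iff_re]
  calc (starRingEnd ℂ) (Matrix.trace (X * Y)) = Matrix.trace ((X * Y)ᴴ) :=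
        (Matrix.trace_conjTranspose _).symm
    _ = Matrix.trace (Yᴴ * Xᴴ) := by rw [Matrix.conjTranspose_mul]
    _ = Matrix.trace (Y * X) := by rw [hX.eq, hY.eq]
    _ = Matrix.trace (X * Y) := Matrix.trace_mul_comm _ _

lemma mComm_sum {d κ : Type*} [Fintype d] (t : Finset κ) (f : κ → Matrix d d ℂ)
    (s : Matrix d d ℂ) : mComm (∑ x ∈ t, f x) s = ∑ x ∈ t, mComm (f x) s := by
  simp [mComm, Finset.sum_mul, Matrix.mul_sum, Finset.sum_sub_distrib]

lemma mComm_smul {d : Type*} [Fintype d] (c : ℂ) (f s : Matrix d d ℂ) :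
    mComm (c • f) s = c • mComm f s := by
  simp [mComm, smul_sub, Matrix.smul_mul, Matrix.mul_smul]

end Aux

/-- **Proposition 4.** For a density matrix `ρ` on the `N`-cell space
and a tensor product `U = U_1 ⊗ ⋯ ⊗ U_N` of local unitaries, there exists a real
orthogonal matrix `O` with `γ_C(UρU†, M) = Oᵀ γ_C(ρ, M) O`; in particular the two
commutation matrices have the same eigenvalues, so the quantum state advantage is
invariant under local unitary evolution: `Γ_C(UρU†) = Γ_C(ρ)`. -/
theorem local_unitary_invariance
    {N : ℕ} {n : Fin N → ℕ}
    (ρ : Matrix ((j : Fin N) → Fin (n j)) ((j : Fin N) → Fin (n j)) ℂ)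
    (hρ : ρ.PosSemidef) (hτ : ρ.trace = 1)
    (s : Matrix ((j : Fin N) → Fin (n j)) ((j : Fin N) → Fin (n j)) ℂ)
    (hs : s.PosSemidef) (hss : s * s = ρ)
    (A : ∀ i : Fin N, Fin (n i ^ 2) → Matrix (Fin (n i)) (Fin (n i)) ℂ)
    (hAh : ∀ i α, (A i α).IsHermitian)
    (hAo : ∀ i α β, Matrix.trace (A i α * A i β) = if α = β then 1 else 0)
    (U : ∀ i : Fin N, Matrix (Fin (n i)) (Fin (n i)) ℂ)
    (hU : ∀ i, (U i)ᴴ * U i = 1 ∧ U i * (U i)ᴴ = 1)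
    (s' : Matrix ((j : Fin N) → Fin (n j)) ((j : Fin N) → Fin (n j)) ℂ)
    (hs' : s'.PosSemidef)
    (hss' : s' * s' = prodOp n U * ρ * (prodOp n U)ᴴ) :
    (∃ O : Matrix ((i : Fin N) × Fin (n i ^ 2)) ((i : Fin N) × Fin (n i ^ 2)) ℝ,
      Oᵀ * O = 1 ∧ O * Oᵀ = 1 ∧
      gammaC s' (obsFamily n A) = Oᵀ * gammaC s (obsFamily n A) * O) ∧
    maxEig (gammaC s' (obsFamily n A)) = maxEig (gammaC s (obsFamily n A)) := by
  classical
  set V := prodOp n U with hVdef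
  have hV1 : Vᴴ * V = 1 := by
    rw [hVdef, prodOp_conjTranspose, prodOp_mul,
      show (fun i => (U i)ᴴ * U i) = (fun i => (1 : Matrix (Fin (n i)) (Fin (n i)) ℂ)) from
        funext fun i => (hU i).1]
    exact prodOp_one
  have hV2 : V * Vᴴ = 1 := mul_eq_one_comm.mp hV1
  -- s' = V s Vᴴ by uniqueness of PSD square roots
  have hseq : s' = V * s * Vᴴ := by
    refine (open scoped MatrixOrder in (CFC.sq_eq_sq_iff s' (V * s * Vᴴ) hs'.nonneg
      (hs.mul_mul_conjTranspose_same V).nonneg).mp ?_)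
    rw [pow_two, pow_two, hss']
    have h1 : V * s * Vᴴ * (V * s * Vᴴ) = V * s * (Vᴴ * V) * (s * Vᴴ) := by
      simp only [Matrix.mul_assoc]
    rw [h1, hV1, Matrix.mul_one, ← hss]
    simp only [Matrix.mul_assoc]
  -- Hermitian conjugated basis elements and expansion coefficients
  have hHerm : ∀ i α, ((U i)ᴴ * A i α * U i).IsHermitian := by
    intro i α
    simp [Matrix.IsHermitian, Matrix.conjTranspose_mul, Matrix.mul_assoc, (hAh i α).eq]
  set w : ∀ i : Fin N, Fin (n i ^ 2) → Fin (n i ^ 2) → ℝ :=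
    fun i α β => (Matrix.trace (A i β * ((U i)ᴴ * A i α * U i))).re with hwdef
  have hcoef : ∀ i α β, ((w i α β : ℝ) : ℂ) = Matrix.trace (A i β * ((U i)ᴴ * A i α * U i)) :=
    fun i α β => trace_mul_herm_real (hAh i β) (hHerm i α)
  have hexp : ∀ i α, (U i)ᴴ * A i α * U i = ∑ β, ((w i α β : ℝ) : ℂ) • A i β := by
    intro i α
    conv_lhs => rw [herm_expand (A i) (hAo i) ((U i)ᴴ * A i α * U i)]
    exact Finset.sum_congr rfl fun β _ => by rw [hcoef i α β]
  -- orthogonality of the coefficient matrices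
  have hortho : ∀ i α ν, ∑ β, w i α β * w i ν β = if α = ν then (1 : ℝ) else 0 := by
    intro i α ν
    have hmul : ((U i)ᴴ * A i α * U i) * ((U i)ᴴ * A i ν * U i)
        = (U i)ᴴ * (A i α * A i ν) * U i := by
      have h2 : (U i)ᴴ * A i α * U i * ((U i)ᴴ * A i ν * U i)
          = (U i)ᴴ * A i α * (U i * (U i)ᴴ) * (A i ν * U i) := by
        simp only [Matrix.mul_assoc]
      rw [h2, (hU i).2, Matrix.mul_one]
      simp only [Matrix.mul_assoc]
    have h1 : Matrix.trace (((U i)ᴴ * A i α * U i) * ((U i)ᴴ * A i ν * U i))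
        = if α = ν then (1 : ℂ) else 0 := by
      rw [hmul, Matrix.trace_mul_cycle, ← Matrix.mul_assoc, (hU i).2, Matrix.one_mul, hAo]
    have h2 : Matrix.trace (((U i)ᴴ * A i α * U i) * ((U i)ᴴ * A i ν * U i))
        = ∑ β, ((w i α β : ℝ) : ℂ) * ((w i ν β : ℝ) : ℂ) := by
      rw [hexp i α, hexp i ν, Finset.sum_mul]
      simp only [Matrix.smul_mul, Matrix.mul_sum, Matrix.mul_smul, Matrix.trace_sum,
        Matrix.trace_smul, smul_smul, smul_eq_mul, hAo]
      rw [Finset.sum_congr rfl fun β _ => Finset.sum_congr rfl fun δ _ => by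
        rw [mul_ite, mul_one, mul_zero]]
      simp only [Finset.sum_ite_eq, Finset.mem_univ, if_true]
      exact Finset.sum_congr rfl fun β _ => mul_comm _ _
    have h3 : ((∑ β, w i α β * w i ν β : ℝ) : ℂ) = ((if α = ν then (1 : ℝ) else 0 : ℝ) : ℂ) := by
      push_cast
      rw [← h2, h1]
      split <;> simp
    exact_mod_cast h3
  -- the orthogonal matrix O
  set O : Matrix ((i : Fin N) × Fin (n i ^ 2)) ((i : Fin N) × Fin (n i ^ 2)) ℝ :=
    fun p q => if h : p.1 = q.1 then w q.1 q.2 (Fin.cast (congrArg (fun k => n k ^ 2) h) p.2) else 0 with hO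
  have hOapp : ∀ (i : Fin N) (β α : Fin (n i ^ 2)), O ⟨i, β⟩ ⟨i, α⟩ = w i α β := by
    intro i β α
    rw [hO]
    exact dif_pos rfl
  have hOapp0 : ∀ (i j : Fin N) (β : Fin (n i ^ 2)) (α : Fin (n j ^ 2)), i ≠ j →
      O ⟨i, β⟩ ⟨j, α⟩ = 0 := by
    intro i j β α hij
    rw [hO]
    exact dif_neg hij
  -- reduction of sums over the sigma type against a column of O
  have hred : ∀ (i : Fin N) (α : Fin (n i ^ 2)) (f : ((k : Fin N) × Fin (n k ^ 2)) → ℝ),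
      (∑ p : (k : Fin N) × Fin (n k ^ 2), O p ⟨i, α⟩ * f p) = ∑ β, w i α β * f ⟨i, β⟩ := by
    intro i α f
    rw [← Finset.univ_sigma_univ, Finset.sum_sigma]
    rw [Finset.sum_eq_single_of_mem i (Finset.mem_univ i)
      (fun k _ hk => Finset.sum_eq_zero fun β _ => by rw [hOapp0 k i β α hk, zero_mul])]
    exact Finset.sum_congr rfl fun β _ => by rw [hOapp]
  -- orthogonality of O
  have hOO : Oᵀ * O = 1 := by
    ext p q
    obtain ⟨i, α⟩ := p
    obtain ⟨j, ν⟩ := q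
    rw [Matrix.mul_apply]
    simp only [Matrix.transpose_apply]
    rw [hred i α (fun p => O p ⟨j, ν⟩)]
    by_cases hij : i = j
    · subst hij
      rw [Finset.sum_congr rfl fun β _ => by rw [hOapp i β ν], hortho i α ν]
      rw [Matrix.one_apply]
      by_cases hav : α = ν
      · subst hav; simp
      · rw [if_neg hav, if_neg (by simp [Sigma.mk.inj_iff, hav])]
    · rw [Finset.sum_congr rfl fun β _ => by rw [hOapp0 i j β ν hij, mul_zero],
        Finset.sum_const_zero, Matrix.one_apply_ne (by simp [Sigma.mk.inj_iff, hij])]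
  have hOOT : O * Oᵀ = 1 := mul_eq_one_comm.mp hOO
  -- conjugated observables expand in the observable family
  have hME : ∀ (i : Fin N) (α : Fin (n i ^ 2)),
      Vᴴ * obsFamily n A ⟨i, α⟩ * V = ∑ β, ((w i α β : ℝ) : ℂ) • obsFamily n A ⟨i, β⟩ := by
    intro i α
    show Vᴴ * localOp n i (A i α) * V = ∑ β, ((w i α β : ℝ) : ℂ) • localOp n i (A i β)
    rw [hVdef, localOp_conj i (A i α) U hU, hexp i α, localOp_sum]
    exact Finset.sum_congr rfl fun β _ => localOp_smul _ _ _
  -- commutators with the conjugated square root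
  have hcomm : ∀ X : Matrix ((j : Fin N) → Fin (n j)) ((j : Fin N) → Fin (n j)) ℂ,
      mComm X (V * s * Vᴴ) = V * mComm (Vᴴ * X * V) s * Vᴴ := by
    intro X
    simp only [mComm, Matrix.mul_sub, Matrix.sub_mul]
    congr 1
    · have : V * (Vᴴ * X * V * s) * Vᴴ = (V * Vᴴ) * (X * (V * s * Vᴴ)) := by
        simp only [Matrix.mul_assoc]
      rw [this, hV2, Matrix.one_mul]
    · have : V * (s * (Vᴴ * X * V)) * Vᴴ = (V * s * Vᴴ) * X * (V * Vᴴ) := by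
        simp only [Matrix.mul_assoc]
      rw [this, hV2, Matrix.mul_one]
  have htr : ∀ X Y : Matrix ((j : Fin N) → Fin (n j)) ((j : Fin N) → Fin (n j)) ℂ,
      Matrix.trace (mComm X (V * s * Vᴴ) * mComm Y (V * s * Vᴴ))
        = Matrix.trace (mComm (Vᴴ * X * V) s * mComm (Vᴴ * Y * V) s) := by
    intro X Y
    rw [hcomm X, hcomm Y]
    have h1 : V * mComm (Vᴴ * X * V) s * Vᴴ * (V * mComm (Vᴴ * Y * V) s * Vᴴ)
        = V * (mComm (Vᴴ * X * V) s * (Vᴴ * V) * mComm (Vᴴ * Y * V) s) * Vᴴ := by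
      simp only [Matrix.mul_assoc]
    rw [h1, hV1, Matrix.mul_one, Matrix.trace_mul_cycle, ← Matrix.mul_assoc, hV1,
      Matrix.one_mul]
  -- entrywise expansion of the transformed gamma matrix
  have hgamma : ∀ (i : Fin N) (α : Fin (n i ^ 2)) (j : Fin N) (τ : Fin (n j ^ 2)),
      gammaC s' (obsFamily n A) ⟨i, α⟩ ⟨j, τ⟩
        = ∑ β, ∑ δ, w i α β * w j τ δ * gammaC s (obsFamily n A) ⟨i, β⟩ ⟨j, δ⟩ := by
    intro i α j τ
    show (-(Matrix.trace (mComm (obsFamily n A ⟨i, α⟩) s' * mComm (obsFamily n A ⟨j, τ⟩) s'))).re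
        = _
    rw [hseq, htr, hME i α, hME j τ, mComm_sum, mComm_sum, Finset.sum_mul]
    rw [Finset.sum_congr rfl fun β _ => by
      rw [mComm_smul, Finset.mul_sum, Finset.sum_congr rfl fun δ _ => by
        rw [mComm_smul, Matrix.smul_mul, Matrix.mul_smul, smul_smul]]]
    rw [Matrix.trace_sum]
    rw [Finset.sum_congr rfl fun β _ => Matrix.trace_sum _ _]
    rw [← Finset.sum_neg_distrib]
    rw [Complex.re_sum]
    refine Finset.sum_congr rfl fun β _ => ?_
    rw [← Finset.sum_neg_distrib, Complex.re_sum]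
    refine Finset.sum_congr rfl fun δ _ => ?_
    rw [Matrix.trace_smul, smul_eq_mul, ← Complex.ofReal_mul, ← mul_neg,
      Complex.re_ofReal_mul]
    rfl
  -- the matrix identity
  have key : ∀ (G : Matrix ((i : Fin N) × Fin (n i ^ 2)) ((i : Fin N) × Fin (n i ^ 2)) ℝ)
      (i : Fin N) (α : Fin (n i ^ 2)) (j : Fin N) (τ : Fin (n j ^ 2)),
      (Oᵀ * G * O) ⟨i, α⟩ ⟨j, τ⟩ = ∑ β, ∑ δ, w i α β * w j τ δ * G ⟨i, β⟩ ⟨j, δ⟩ := by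
    intro G i α j τ
    calc (Oᵀ * G * O) ⟨i, α⟩ ⟨j, τ⟩
        = ∑ x, (∑ p, O p ⟨i, α⟩ * G p x) * O x ⟨j, τ⟩ := by
          rw [Matrix.mul_apply]
          exact Finset.sum_congr rfl fun x _ => by rw [Matrix.mul_apply]; rfl
      _ = ∑ p, O p ⟨i, α⟩ * (∑ x, O x ⟨j, τ⟩ * G p x) := by
          simp only [Finset.sum_mul]
          rw [Finset.sum_comm]
          refine Finset.sum_congr rfl fun p _ => ?_
          rw [Finset.mul_sum]
          exact Finset.sum_congr rfl fun x _ => by ring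
      _ = ∑ β, w i α β * (∑ x, O x ⟨j, τ⟩ * G ⟨i, β⟩ x) := hred i α _
      _ = ∑ β, w i α β * (∑ δ, w j τ δ * G ⟨i, β⟩ ⟨j, δ⟩) :=
          Finset.sum_congr rfl fun β _ => by rw [hred j τ (fun x => G ⟨i, β⟩ x)]
      _ = ∑ β, ∑ δ, w i α β * w j τ δ * G ⟨i, β⟩ ⟨j, δ⟩ := by
          refine Finset.sum_congr rfl fun β _ => ?_
          rw [Finset.mul_sum]
          exact Finset.sum_congr rfl fun δ _ => by ring
  have hgam : gammaC s' (obsFamily n A) = Oᵀ * gammaC s (obsFamily n A) * O := by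
    ext p q
    obtain ⟨i, α⟩ := p
    obtain ⟨j, τ⟩ := q
    rw [key, hgamma i α j τ]
  refine ⟨⟨O, hOO, hOOT, hgam⟩, ?_⟩
  have hsets : {c : ℝ | ∃ v : ((i : Fin N) × Fin (n i ^ 2)) → ℝ, v ≠ 0 ∧
        (gammaC s' (obsFamily n A)).mulVec v = c • v}
      = {c : ℝ | ∃ v : ((i : Fin N) × Fin (n i ^ 2)) → ℝ, v ≠ 0 ∧
        (gammaC s (obsFamily n A)).mulVec v = c • v} := by
    ext c
    simp only [Set.mem_setOf_eq]
    constructor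
    · rintro ⟨v, hv0, hv⟩
      refine ⟨O.mulVec v, fun h0 => hv0 ?_, ?_⟩
      · have h1 := congrArg (Oᵀ.mulVec) h0
        rwa [Matrix.mulVec_mulVec, hOO, Matrix.one_mulVec, Matrix.mulVec_zero] at h1
      · have hGO : gammaC s (obsFamily n A) * O = O * gammaC s' (obsFamily n A) := by
          rw [hgam, ← Matrix.mul_assoc, ← Matrix.mul_assoc, hOOT, Matrix.one_mul]
        rw [Matrix.mulVec_mulVec, hGO, ← Matrix.mulVec_mulVec, hv, Matrix.mulVec_smul]
    · rintro ⟨v, hv0, hv⟩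
      refine ⟨Oᵀ.mulVec v, fun h0 => hv0 ?_, ?_⟩
      · have h1 := congrArg (O.mulVec) h0
        rwa [Matrix.mulVec_mulVec, hOOT, Matrix.one_mulVec, Matrix.mulVec_zero] at h1
      · have hGO : gammaC s' (obsFamily n A) * Oᵀ = Oᵀ * gammaC s (obsFamily n A) := by
          rw [hgam, Matrix.mul_assoc (Oᵀ * gammaC s (obsFamily n A)) O Oᵀ, hOOT,
            Matrix.mul_one]
        rw [Matrix.mulVec_mulVec, hGO, ← Matrix.mulVec_mulVec, hv, Matrix.mulVec_smul]
  unfold maxEig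
  rw [hsets]
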